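/- (Sure optimality implies identification with the Snell envelope) Let ρ satisfy (C1)-(C4) and subadditivity (P1), let Y* be the upper Snell envelope of the adapted cash-flow H, and let M be any ρ-martingale. Fix i ∈ {0,...,T}. If the random variable θ_i := max_{i ≤ j ≤ T}(H_j − M_j + M_i) is F_i-measurable, then θ_i = Y*_i almost surely. -/

import Mathlib

open MeasureTheory

/-- Sure optimality implies identification with the Snell envelope: for a DMU
`ρ` satisfying (C1)–(C4) and subadditivity (P1), a `ρ`-martingale `M`, and
the upper Snell envelope `Y*` of `H`, if
`θ_i := max_{i ≤ j ≤ T} (H_j - M_j + M_i)` is `F_i`-measurable, then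
`θ_i = Y*_i` almost surely. -/
theorem dmu_surely_optimal_identification
    {Ω : Type*} {m : MeasurableSpace Ω} (μ : Measure Ω) [IsProbabilityMeasure μ]
    (F : MeasureTheory.Filtration ℕ m) (T : ℕ)
    (ρ : ℕ → (Ω → ℝ) → (Ω → ℝ))
    (hmeas : ∀ s (X : Ω → ℝ), Measurable[F s] (ρ s X))
    (hmono : ∀ s, s ≤ T → ∀ (X Y : Ω → ℝ), X ≤ Y → ρ s X ≤ ρ s Y)
    (hreg : ∀ s, s ≤ T → ∀ (X : Ω → ℝ) (A : Set Ω), MeasurableSet[F s] A →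
      ρ s (A.indicator X) = A.indicator (ρ s X))
    (hrec : ∀ s, s < T → ∀ (X : Ω → ℝ), ρ s (ρ (s + 1) X) = ρ s X)
    (hcti : ∀ s, s ≤ T → ∀ (X Y : Ω → ℝ), Measurable[F s] Y →
      ρ s (X + Y) = ρ s X + Y)
    (hsub : ∀ s, s ≤ T → ∀ (X Y : Ω → ℝ), ρ s (X + Y) ≤ ρ s X + ρ s Y)
    (H : ℕ → Ω → ℝ) (hHadapted : ∀ s, Measurable[F s] (H s))
    (M : ℕ → Ω → ℝ) (hMadapted : ∀ s, Measurable[F s] (M s))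
    (hMmart : ∀ s, s < T → M s = ρ s (M (s + 1)))
    (Ystar : ℕ → Ω → ℝ)
    (i : ℕ) (hi : i ≤ T)
    -- `Y*_i` dominates `ρ_i (H_τ)` for every stopping time `i ≤ τ ≤ T`
    (hlow : ∀ τ : Ω → ℕ, (∀ j, MeasurableSet[F j] {ω | τ ω = j}) →
      (∀ ω, i ≤ τ ω ∧ τ ω ≤ T) →
      ∀ ω, ρ i (fun ω' => H (τ ω') ω') ω ≤ Ystar i ω)
    -- dual inequality for the `ρ`-martingale `M`
    (hdual : ∀ ω, Ystar i ω ≤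
      ρ i (fun ω' => (Finset.Icc i T).sup' (Finset.nonempty_Icc.mpr hi)
        (fun j => H j ω' + M i ω' - M j ω')) ω)
    (hθmeas : Measurable[F i]
      (fun ω => (Finset.Icc i T).sup' (Finset.nonempty_Icc.mpr hi)
        (fun j => H j ω - M j ω + M i ω))) :
    (fun ω => (Finset.Icc i T).sup' (Finset.nonempty_Icc.mpr hi)
        (fun j => H j ω - M j ω + M i ω)) =ᵐ[μ] Ystar i := by

  classical
  -- notation
  set θ : Ω → ℝ := fun ω => (Finset.Icc i T).sup' (Finset.nonempty_Icc.mpr hi)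
      (fun j => H j ω - M j ω + M i ω) with hθdef
  set f : ℕ → Ω → ℝ := fun j ω => H j ω - M j ω with hfdef
  set S : Ω → ℝ := fun ω => (Finset.Icc i T).sup' (Finset.nonempty_Icc.mpr hi)
      (fun j => f j ω) with hSdef
  have hθS : ∀ ω, θ ω = S ω + M i ω := by
    intro ω
    simp only [hθdef, hSdef, hfdef]
    rw [Finset.sup'_add]
  -- ρ_s 0 = 0
  have hzero : ∀ s, s ≤ T → ρ s (0 : Ω → ℝ) = 0 := by
    intro s hs
    have h := hreg s hs (0 : Ω → ℝ) ∅ (@MeasurableSet.empty _ (F s))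
    have h' : ρ s (0 : Ω → ℝ) = fun _ => 0 := by simpa using h
    exact h'
  -- S is F_i-measurable
  have hSmeas : Measurable[F i] S := by
    have : S = fun ω => θ ω - M i ω := by
      funext ω; rw [hθS ω]; ring
    rw [this]
    exact hθmeas.sub (hMadapted i)
  -- each f j is F_j-measurable
  have hfmeas : ∀ j, Measurable[F j] (f j) := fun j => (hHadapted j).sub (hMadapted j)
  -- UPPER bound : Ystar i ≤ θ everywhere
  have hupper : ∀ ω, Ystar i ω ≤ θ ω := by
    intro ω
    have h1 := hdual ω
    have h2 : (fun ω' => (Finset.Icc i T).sup' (Finset.nonempty_Icc.mpr hi)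
        (fun j => H j ω' + M i ω' - M j ω')) = θ := by
      funext ω'
      simp only [hθdef]
      apply Finset.sup'_congr _ rfl
      intro j _; ring
    rw [h2] at h1
    have h3 : ρ i θ = θ := by
      have h := hcti i hi 0 θ hθmeas
      rwa [zero_add, hzero i hi, zero_add] at h
    rwa [h3] at h1
  -- the sup is attained
  have hex : ∀ ω, ∃ j, (i ≤ j ∧ j ≤ T) ∧ f j ω = S ω := by
    intro ω
    obtain ⟨j, hj, hje⟩ := Finset.exists_mem_eq_sup' (Finset.nonempty_Icc.mpr hi)
      (fun j => f j ω)
    exact ⟨j, Finset.mem_Icc.mp hj, hje.symm⟩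
  -- the stopping time: first argmax
  set τ : Ω → ℕ := fun ω => Nat.find (hex ω) with hτdef
  have hτspec : ∀ ω, (i ≤ τ ω ∧ τ ω ≤ T) ∧ f (τ ω) ω = S ω := fun ω => Nat.find_spec (hex ω)
  have hτbd : ∀ ω, i ≤ τ ω ∧ τ ω ≤ T := fun ω => (hτspec ω).1
  -- {τ = j} is F_j-measurable
  have hτmeas : ∀ j, MeasurableSet[F j] {ω | τ ω = j} := by
    intro j
    by_cases hj : i ≤ j ∧ j ≤ T
    · have hset : {ω | τ ω = j} =
          {ω | f j ω = S ω} ∩ ⋂ k ∈ Finset.Ico i j, {ω | f k ω ≠ S ω} := by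
        ext ω
        simp only [Set.mem_setOf_eq, Set.mem_inter_iff, Set.mem_iInter]
        constructor
        · intro h
          have hspec := hτspec ω
          rw [h] at hspec
          refine ⟨hspec.2, ?_⟩
          intro k hk hkS
          have hk' := Finset.mem_Ico.mp hk
          have hkτ : k < τ ω := by omega
          have : ¬((i ≤ k ∧ k ≤ T) ∧ f k ω = S ω) := Nat.find_min (hex ω) hkτ
          exact this ⟨⟨hk'.1, le_trans (le_of_lt hk'.2) hj.2⟩, hkS⟩
        · rintro ⟨hfj, hlt⟩
          have h1 : τ ω ≤ j := Nat.find_le ⟨hj, hfj⟩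
          rcases lt_or_eq_of_le h1 with h2 | h2
          · exfalso
            have hspec := hτspec ω
            exact hlt (τ ω) (Finset.mem_Ico.mpr ⟨hspec.1.1, h2⟩) hspec.2
          · exact h2
      rw [hset]
      have hSj : Measurable[F j] S := hSmeas.mono (F.mono hj.1) le_rfl
      refine MeasurableSet.inter (measurableSet_eq_fun (m := F j) (hfmeas j) hSj) ?_
      refine MeasurableSet.biInter (Finset.Ico i j).countable_toSet ?_
      intro k hk
      have hk2 : i ≤ k ∧ k < j := Finset.mem_Ico.mp hk
      have hfk : Measurable[F j] (f k) := (hfmeas k).mono (F.mono (le_of_lt hk2.2)) le_rfl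
      have hSk : Measurable[F j] S := hSmeas.mono (F.mono hj.1) le_rfl
      exact (measurableSet_eq_fun (m := F j) hfk hSk).compl
    · have : {ω | τ ω = j} = ∅ := by
        ext ω
        simp only [Set.mem_setOf_eq, Set.mem_empty_iff_false, iff_false]
        intro h
        exact hj (h ▸ (hτbd ω))
      rw [this]; exact @MeasurableSet.empty _ (F j)
  -- the process V s : value of M_τ on {τ ≤ s}, 0 elsewhere, as a sum
  set V : ℕ → Ω → ℝ := fun s ω =>
      ∑ j ∈ Finset.Icc i s, ({ω' | τ ω' = j}).indicator (M j) ω with hVdef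
  have hVmeas : ∀ s, i ≤ s → Measurable[F s] (V s) := by
    intro s hs
    apply Finset.measurable_sum
    intro j hj
    have hjs : j ≤ s := (Finset.mem_Icc.mp hj).2
    exact Measurable.indicator ((hMadapted j).mono (F.mono hjs) le_rfl)
      (F.mono hjs _ (hτmeas j))
  have hVle : ∀ s ω, τ ω ≤ s → V s ω = M (τ ω) ω := by
    intro s ω h
    simp only [hVdef]
    rw [Finset.sum_eq_single_of_mem (τ ω) (Finset.mem_Icc.mpr ⟨(hτbd ω).1, h⟩)]
    · exact Set.indicator_of_mem (show ω ∈ {ω' | τ ω' = τ ω} from rfl) _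
    · intro j _ hj
      exact Set.indicator_of_notMem (by simp only [Set.mem_setOf_eq]; omega) _
  have hVgt : ∀ s ω, s < τ ω → V s ω = 0 := by
    intro s ω h
    simp only [hVdef]
    apply Finset.sum_eq_zero
    intro j hj
    have hne : j ≠ τ ω := by
      have := (Finset.mem_Icc.mp hj).2; omega
    exact Set.indicator_of_notMem (by simp only [Set.mem_setOf_eq]; omega) _
  -- stopped process U s = M_{τ ∧ s}
  set U : ℕ → Ω → ℝ := fun s ω => M (min (τ ω) s) ω with hUdef
  -- A s := {τ ≤ s} is F_s-measurable
  have hAmeas : ∀ s, MeasurableSet[F s] {ω | τ ω ≤ s} := by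
    intro s
    have : {ω | τ ω ≤ s} = ⋃ j ∈ {j : ℕ | j ≤ s}, {ω | τ ω = j} := by
      ext ω
      simp only [Set.mem_setOf_eq, Set.mem_iUnion]
      exact ⟨fun h => ⟨τ ω, h, rfl⟩, fun ⟨j, hj, hje⟩ => by omega⟩
    rw [this]
    refine MeasurableSet.biUnion (Set.to_countable _) ?_
    intro j hj
    exact F.mono hj _ (hτmeas j)
  -- one-step identity
  have hstep : ∀ s, i ≤ s → s < T → ρ s (U (s+1)) = U s := by
    intro s hsi hsT
    have hdecomp : U (s+1) = ({ω | τ ω ≤ s}ᶜ).indicator (M (s+1)) + V s := by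
      funext ω
      simp only [Pi.add_apply, hUdef]
      by_cases h : τ ω ≤ s
      · rw [Set.indicator_of_notMem (by simpa using h), hVle s ω h,
          min_eq_left (by omega)]
        ring
      · rw [Set.indicator_of_mem (by simpa using h), hVgt s ω (by omega),
          min_eq_right (by omega)]
        ring
    rw [hdecomp, hcti s (le_of_lt hsT) _ (V s) (hVmeas s hsi),
      hreg s (le_of_lt hsT) _ _ (hAmeas s).compl, ← hMmart s hsT]
    funext ω
    simp only [Pi.add_apply, hUdef]
    by_cases h : τ ω ≤ s
    · rw [Set.indicator_of_notMem (by simpa using h), hVle s ω h, min_eq_left h]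
      ring
    · rw [Set.indicator_of_mem (by simpa using h), hVgt s ω (by omega),
        min_eq_right (by omega)]
      ring
  -- U T = M_τ
  have hUT : U T = fun ω => M (τ ω) ω := by
    funext ω
    simp only [hUdef, min_eq_left (hτbd ω).2]
  -- backward induction: ρ s (U T) = U s
  have hbase : ρ T (U T) = U T := by
    have hUTmeas : Measurable[F T] (U T) := by
      have : U T = V T := by
        funext ω
        rw [hUT]; exact (hVle T ω (hτbd ω).2).symm
      rw [this]
      exact hVmeas T hi
    have h := hcti T le_rfl 0 (U T) hUTmeas
    rwa [zero_add, hzero T le_rfl, zero_add] at h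
  have hmain : ∀ k, ∀ s, i ≤ s → s + k = T → ρ s (U T) = U s := by
    intro k
    induction k with
    | zero =>
      intro s hs hsT
      have hsT' : s = T := by omega
      rw [hsT']
      exact hbase
    | succ k ih =>
      intro s hs hsT
      have hsT' : s < T := by omega
      rw [← hrec s hsT' (U T), ih (s+1) (by omega) (by omega), hstep s hs hsT']
  have hsampling : ρ i (U T) = U i := hmain (T - i) i le_rfl (by omega)
  have hUi : U i = M i := by
    funext ω
    simp only [hUdef, min_eq_right (hτbd ω).1]
  -- lower bound: θ ≤ Ystar i everywhere
  have hlower : ∀ ω, θ ω ≤ Ystar i ω := by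
    intro ω
    have hHτ : (fun ω' => H (τ ω') ω') = U T + S := by
      funext ω'
      have h1 : f (τ ω') ω' = S ω' := (hτspec ω').2
      simp only [hfdef] at h1
      simp only [Pi.add_apply, hUT]
      linarith
    have h2 := hlow τ hτmeas hτbd ω
    rw [hHτ, hcti i hi (U T) S hSmeas, hsampling, hUi] at h2
    calc θ ω = S ω + M i ω := hθS ω
    _ = M i ω + S ω := by ring
    _ ≤ Ystar i ω := h2
  exact Filter.Eventually.of_forall (fun ω => le_antisymm (hlower ω) (hupper ω))
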